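/- The reduction from PARTITION is correct: given positive integers s(a_1),...,s(a_n) with total sum 2C, construct the directed graph on vertices v_0,...,v_n where each consecutive pair (v_{k-1}, v_k) is joined by two parallel arcs whose jobs have two-machine processing times (s(a_k), 0) and (0, s(a_k)) respectively. Then there exists a v_0–v_n path whose jobs admit a two-machine flow shop schedule with makespan at most C if and only if there is a subset T ⊆ {1,...,n} with sum_{k∈T} s(a_k) = C. -/

import Mathlib

/-! STATEMENT 8: Correctness of the reduction from PARTITION to
`F2|shortest path|C_max`. -/

namespace PartitionReduction

/-- `chainFrom u P v`: the list of arcs `P` forms a directed walk from `u` to `v`. -/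
def chainFrom {β : Type} : ℕ → List (ℕ × ℕ × β) → ℕ → Prop
  | u, [], v => u = v
  | u, a :: r, v => a.1 = u ∧ chainFrom a.2.1 r v

/-- The jobs in the list `jobs` (with processing times on machines 1 and 2)
admit a feasible two-machine flow shop schedule with makespan at most `C`. -/
def schedulable2 (jobs : List (ℕ × ℕ)) (C : ℕ) : Prop :=
  ∃ S1 S2 : Fin jobs.length → ℝ,
    (∀ j, 0 ≤ S1 j) ∧
    (∀ j, S1 j + ((jobs.get j).1 : ℝ) ≤ S2 j) ∧
    (∀ j k, j ≠ k →
      S1 j + ((jobs.get j).1 : ℝ) ≤ S1 k ∨ S1 k + ((jobs.get k).1 : ℝ) ≤ S1 j) ∧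
    (∀ j k, j ≠ k →
      S2 j + ((jobs.get j).2 : ℝ) ≤ S2 k ∨ S2 k + ((jobs.get k).2 : ℝ) ≤ S2 j) ∧
    (∀ j, S2 j + ((jobs.get j).2 : ℝ) ≤ (C : ℝ))

/-- The arcs of the reduction graph on vertices `0, …, n`: each consecutive
pair `(k, k+1)` is joined by two parallel arcs, carrying the jobs
`(s k, 0)` and `(0, s k)` respectively. -/
def reductionArcs (n : ℕ) (s : Fin n → ℕ) : List (ℕ × ℕ × ℕ × ℕ) :=
  (List.finRange n).flatMap fun (k : Fin n) =>
    [((k : ℕ), (k : ℕ) + 1, s k, 0), ((k : ℕ), (k : ℕ) + 1, 0, s k)]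

/-! ### Auxiliary lemmas -/

/-- Sum of lengths of pairwise disjoint intervals contained in `[0,B]` is at most `B`. -/
lemma packing {ι : Type*} [DecidableEq ι] (F : Finset ι) (S p : ι → ℝ)
    (hp : ∀ j ∈ F, 0 < p j)
    (hd : ∀ j ∈ F, ∀ k ∈ F, j ≠ k → S j + p j ≤ S k ∨ S k + p k ≤ S j) :
    ∀ B : ℝ, 0 ≤ B → (∀ j ∈ F, 0 ≤ S j) → (∀ j ∈ F, S j + p j ≤ B) →
    ∑ j ∈ F, p j ≤ B := by
  induction F using Finset.strongInduction with
  | _ F ih =>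
    intro B hB0 h0 hB
    rcases F.eq_empty_or_nonempty with rfl | hne
    · simpa using hB0
    obtain ⟨j0, hj0F, hj0max⟩ := F.exists_max_image (fun j => S j + p j) hne
    have herase : ∀ k ∈ F.erase j0, S k + p k ≤ S j0 := by
      intro k hk
      have hkF := Finset.mem_of_mem_erase hk
      have hne' := Finset.ne_of_mem_erase hk
      rcases hd k hkF j0 hj0F hne' with h | h
      · exact h
      · have h1 := hj0max k hkF
        have h2 := hp k hkF
        have h3 := hp j0 hj0F
        linarith
    have hih := ih (F.erase j0) (Finset.erase_ssubset hj0F)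
      (fun j hj => hp j (Finset.mem_of_mem_erase hj))
      (fun j hj k hk => hd j (Finset.mem_of_mem_erase hj) k (Finset.mem_of_mem_erase hk))
      (S j0) (h0 j0 hj0F) (fun j hj => h0 j (Finset.mem_of_mem_erase hj)) herase
    have := hB j0 hj0F
    rw [← Finset.sum_erase_add F p hj0F]
    linarith

lemma sum_map_get {α β : Type*} [AddCommMonoid β] (l : List α) (f : α → β) :
    (l.map f).sum = ∑ i : Fin l.length, f (l.get i) := by
  calc (l.map f).sum = (List.ofFn (f ∘ l.get)).sum := by
        rw [← List.map_ofFn, List.ofFn_get]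
    _ = ∑ i, f (l.get i) := by rw [List.sum_ofFn]; rfl

/-- Machine load bound coming from a feasible schedule on one machine. -/
lemma load_le {m : ℕ} (q : Fin m → ℕ) (S : Fin m → ℝ) (C : ℕ)
    (h0 : ∀ j, 0 ≤ S j)
    (hd : ∀ j k, j ≠ k → S j + (q j : ℝ) ≤ S k ∨ S k + (q k : ℝ) ≤ S j)
    (hC : ∀ j, S j + (q j : ℝ) ≤ (C : ℝ)) :
    ∑ j, q j ≤ C := by
  have key : (∑ j ∈ Finset.univ.filter (fun j => q j ≠ 0), ((q j : ℝ))) ≤ (C : ℝ) := by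
    apply packing _ S _ ?_ ?_ (C : ℝ) (by positivity) (fun j _ => h0 j) (fun j _ => hC j)
    · intro j hj
      simp only [Finset.mem_filter] at hj
      exact_mod_cast Nat.pos_of_ne_zero hj.2
    · intro j _ k _ hjk
      exact hd j k hjk
  have : (∑ j, (q j : ℝ)) ≤ (C : ℝ) := by
    have heq : (∑ j, (q j : ℝ)) = ∑ j ∈ Finset.univ.filter (fun j => q j ≠ 0), ((q j : ℝ)) := by
      refine (Finset.sum_subset (Finset.filter_subset _ _) ?_).symm
      intro j _ hj
      simp only [Finset.mem_filter, Finset.mem_univ, true_and, not_not] at hj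
      simp [hj]
    rw [heq]; exact key
  exact_mod_cast (by push_cast at this ⊢; exact this : ((∑ j, q j : ℕ) : ℝ) ≤ (C:ℝ))

/-- Properties of the prefix-sum function of a list of naturals. -/
lemma prefix_facts (l : List ℕ) :
    (∀ i (h : i < l.length), ((l.take (i+1)).sum = (l.take i).sum + l[i])) ∧
    Monotone (fun i => (l.take i).sum) ∧ (∀ i, (l.take i).sum ≤ l.sum) := by
  refine ⟨fun i h => List.sum_take_succ l i h, ?_, fun i => ?_⟩
  · apply monotone_nat_of_le_succ
    intro i
    by_cases h : i < l.length
    · rw [List.sum_take_succ l i h]; omega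
    · rw [List.take_of_length_le (by omega), List.take_of_length_le (by omega)]
  · have := List.sum_take_add_sum_drop l i; omega

/-- If every job needs only one of the two machines, then any horizon at least
as large as each machine load is achievable. -/
lemma schedulable2_of_disjoint (jobs : List (ℕ × ℕ)) (C : ℕ)
    (hdis : ∀ j ∈ jobs, j.1 = 0 ∨ j.2 = 0)
    (h1 : (jobs.map Prod.fst).sum ≤ C)
    (h2 : (jobs.map Prod.snd).sum ≤ C) :
    schedulable2 jobs C := by
  classical
  set l1 := jobs.map Prod.fst with hl1
  set l2 := jobs.map Prod.snd with hl2
  obtain ⟨succ1, mono1, le1⟩ := prefix_facts l1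
  obtain ⟨succ2, mono2, le2⟩ := prefix_facts l2
  have hlen1 : l1.length = jobs.length := List.length_map _
  have hlen2 : l2.length = jobs.length := List.length_map _
  have hget1 : ∀ (j : Fin jobs.length), l1[(j:ℕ)]'(by omega) = (jobs.get j).1 := by
    intro j; simp [hl1]
  have hget2 : ∀ (j : Fin jobs.length), l2[(j:ℕ)]'(by omega) = (jobs.get j).2 := by
    intro j; simp [hl2]
  have hdis' : ∀ j : Fin jobs.length, (jobs.get j).1 = 0 ∨ (jobs.get j).2 = 0 :=
    fun j => hdis _ (List.get_mem jobs j)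
  have s1 : ∀ j : Fin jobs.length,
      (l1.take ((j:ℕ)+1)).sum = (l1.take (j:ℕ)).sum + (jobs.get j).1 := by
    intro j; rw [succ1 (j:ℕ) (by omega), hget1]
  have s2 : ∀ j : Fin jobs.length,
      (l2.take ((j:ℕ)+1)).sum = (l2.take (j:ℕ)).sum + (jobs.get j).2 := by
    intro j; rw [succ2 (j:ℕ) (by omega), hget2]
  refine ⟨fun j => if (jobs.get j).1 = 0 then 0 else ((l1.take (j:ℕ)).sum : ℝ),
          fun j => if (jobs.get j).1 = 0 then ((l2.take (j:ℕ)).sum : ℝ) else (C : ℝ),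
          fun j => ?_, fun j => ?_, fun j k hjk => ?_, fun j k hjk => ?_, fun j => ?_⟩
  · dsimp only; split <;> positivity
  · dsimp only
    by_cases h : (jobs.get j).1 = 0
    · rw [if_pos h, if_pos h, h]
      simp only [Nat.cast_zero, add_zero, zero_add]
      positivity
    · rw [if_neg h, if_neg h]
      have : (l1.take (j:ℕ)).sum + (jobs.get j).1 ≤ C := by
        rw [← s1 j]; exact le_trans (le1 _) h1
      exact_mod_cast this
  · -- machine 1 non-overlap
    dsimp only
    by_cases hj : (jobs.get j).1 = 0
    · left; rw [if_pos hj, hj]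
      simp only [Nat.cast_zero, add_zero, zero_add]
      split <;> positivity
    · by_cases hk : (jobs.get k).1 = 0
      · right; rw [if_pos hk, hk]
        simp only [Nat.cast_zero, add_zero, zero_add]
        split <;> positivity
      · rw [if_neg hj, if_neg hk]
        rcases lt_or_gt_of_ne (fun h : (j:ℕ) = (k:ℕ) => hjk (Fin.ext h)) with h | h
        · left
          have : (l1.take (j:ℕ)).sum + (jobs.get j).1 ≤ (l1.take (k:ℕ)).sum := by
            rw [← s1 j]; exact mono1 (by omega)
          exact_mod_cast this
        · right
          have : (l1.take (k:ℕ)).sum + (jobs.get k).1 ≤ (l1.take (j:ℕ)).sum := by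
            rw [← s1 k]; exact mono1 (by omega)
          exact_mod_cast this
  · -- machine 2 non-overlap
    dsimp only
    by_cases hj : (jobs.get j).1 = 0
    · by_cases hk : (jobs.get k).1 = 0
      · rw [if_pos hj, if_pos hk]
        rcases lt_or_gt_of_ne (fun h : (j:ℕ) = (k:ℕ) => hjk (Fin.ext h)) with h | h
        · left
          have : (l2.take (j:ℕ)).sum + (jobs.get j).2 ≤ (l2.take (k:ℕ)).sum := by
            rw [← s2 j]; exact mono2 (by omega)
          exact_mod_cast this
        · right
          have : (l2.take (k:ℕ)).sum + (jobs.get k).2 ≤ (l2.take (j:ℕ)).sum := by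
            rw [← s2 k]; exact mono2 (by omega)
          exact_mod_cast this
      · left
        rw [if_pos hj, if_neg hk]
        have : (l2.take (j:ℕ)).sum + (jobs.get j).2 ≤ C := by
          rw [← s2 j]; exact le_trans (le2 _) h2
        exact_mod_cast this
    · right
      rw [if_neg hj]
      rcases hdis' j with hj1 | hj2
      · exact absurd hj1 hj
      by_cases hk : (jobs.get k).1 = 0
      · rw [if_pos hk]
        have : (l2.take (k:ℕ)).sum + (jobs.get k).2 ≤ C := by
          rw [← s2 k]; exact le_trans (le2 _) h2
        exact_mod_cast this
      · rcases hdis' k with hk1 | hk2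
        · exact absurd hk1 hk
        rw [if_neg hk, hk2]
        simp only [Nat.cast_zero, add_zero, zero_add]
        exact le_rfl
  · -- horizon
    dsimp only
    by_cases hj : (jobs.get j).1 = 0
    · rw [if_pos hj]
      have : (l2.take (j:ℕ)).sum + (jobs.get j).2 ≤ C := by
        rw [← s2 j]; exact le_trans (le2 _) h2
      exact_mod_cast this
    · rcases hdis' j with hj1 | hj2
      · exact absurd hj1 hj
      rw [if_neg hj, hj2]
      simp only [Nat.cast_zero, add_zero, zero_add]
      exact le_rfl

lemma mem_reductionArcs {n : ℕ} {s : Fin n → ℕ} {a : ℕ × ℕ × ℕ × ℕ} :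
    a ∈ reductionArcs n s ↔
      ∃ k : Fin n, a = ((k : ℕ), (k : ℕ) + 1, s k, 0) ∨ a = ((k : ℕ), (k : ℕ) + 1, 0, s k) := by
  simp only [reductionArcs, List.mem_flatMap, List.mem_finRange, List.mem_cons,
    List.mem_singleton, List.not_mem_nil, or_false, true_and]

lemma chain_structure {β : Type} :
    ∀ (P : List (ℕ × ℕ × β)) (u v : ℕ), chainFrom u P v →
      (∀ a ∈ P, a.2.1 = a.1 + 1) →
      v = u + P.length ∧ ∀ i (h : i < P.length), (P.get ⟨i, h⟩).1 = u + i := by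
  intro P
  induction P with
  | nil =>
    intro u v h _
    exact ⟨by simpa [chainFrom] using h.symm, fun i hi => absurd hi (by simp)⟩
  | cons a r ih =>
    intro u v h hstep
    obtain ⟨ha, hr⟩ := h
    have hsucc : a.2.1 = a.1 + 1 := hstep a List.mem_cons_self
    obtain ⟨h1, h2⟩ := ih a.2.1 v hr (fun b hb => hstep b (List.mem_cons_of_mem _ hb))
    refine ⟨by simp [h1, hsucc, ha, List.length_cons]; omega, ?_⟩
    intro i hi
    match i with
    | 0 => simpa using ha
    | (m+1) =>
      have hm : m < r.length := by simpa [List.length_cons] using hi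
      have := h2 m hm
      have hget : ((a :: r).get ⟨m+1, hi⟩) = r.get ⟨m, hm⟩ := rfl
      rw [hget, this, hsucc, ha]
      omega

lemma chain_of_gets {β : Type} :
    ∀ (P : List (ℕ × ℕ × β)) (u : ℕ),
      (∀ i (h : i < P.length), (P.get ⟨i, h⟩).1 = u + i ∧ (P.get ⟨i, h⟩).2.1 = u + i + 1) →
      chainFrom u P (u + P.length) := by
  intro P
  induction P with
  | nil => intro u _; simp [chainFrom]
  | cons a r ih =>
    intro u h
    obtain ⟨h01, h02⟩ := h 0 (Nat.succ_pos _)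
    refine ⟨by simpa using h01, ?_⟩
    have h2 : a.2.1 = u + 1 := by simpa using h02
    rw [h2, show u + (a :: r).length = (u + 1) + r.length by simp [List.length_cons]; omega]
    refine ih (u + 1) (fun i hi => ?_)
    obtain ⟨c1, c2⟩ := h (i + 1) (by simp [List.length_cons]; omega)
    have hget : ((a :: r).get ⟨i+1, by simp [List.length_cons]; omega⟩) = r.get ⟨i, hi⟩ := rfl
    rw [hget] at c1 c2
    exact ⟨by rw [c1]; omega, by rw [c2]; omega⟩

/-- Given positive integers `s 0, …, s (n-1)` with total sum `2C`, there is a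
`v₀–vₙ` path in the reduction graph whose jobs admit a two-machine flow shop
schedule with makespan at most `C` iff some subset of the `s k` sums to `C`. -/
theorem reduction_correct (n C : ℕ) (s : Fin n → ℕ)
    (hpos : ∀ k, 0 < s k) (htot : ∑ k, s k = 2 * C) :
    (∃ P : List (ℕ × ℕ × ℕ × ℕ),
        (∀ a ∈ P, a ∈ reductionArcs n s) ∧ P.Nodup ∧ chainFrom 0 P n ∧
        schedulable2 (P.map fun a => (a.2.2.1, a.2.2.2)) C) ↔
      ∃ T : Finset (Fin n), ∑ k ∈ T, s k = C := by
  classical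
  constructor
  · rintro ⟨P, hmem, -, hchain, hsched⟩
    have hstep : ∀ a ∈ P, a.2.1 = a.1 + 1 := by
      intro a ha
      rcases mem_reductionArcs.1 (hmem a ha) with ⟨k, hk | hk⟩ <;> simp [hk]
    obtain ⟨hlenP, hfst⟩ := chain_structure P 0 n hchain hstep
    have hPlen : P.length = n := by omega
    set jobs := P.map (fun a => (a.2.2.1, a.2.2.2)) with hjobs
    have hjlen : jobs.length = n := by simp [hjobs, hPlen]
    have hform : ∀ k : Fin n, P.get ⟨(k:ℕ), by omega⟩ = ((k:ℕ), (k:ℕ)+1, s k, 0) ∨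
        P.get ⟨(k:ℕ), by omega⟩ = ((k:ℕ), (k:ℕ)+1, 0, s k) := by
      intro k
      have hmem' := hmem _ (List.get_mem P ⟨(k:ℕ), by omega⟩)
      rcases mem_reductionArcs.1 hmem' with ⟨k', hk' | hk'⟩
      · left
        have h1 := hfst (k:ℕ) (by omega)
        rw [hk'] at h1
        have : k' = k := Fin.ext (by simpa using h1)
        rw [hk', this]
      · right
        have h1 := hfst (k:ℕ) (by omega)
        rw [hk'] at h1
        have : k' = k := Fin.ext (by simpa using h1)
        rw [hk', this]
    set job : Fin n → ℕ × ℕ := fun k => jobs.get (Fin.cast hjlen.symm k) with hjobdef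
    have hjob : ∀ k : Fin n, job k = (s k, 0) ∨ job k = (0, s k) := by
      intro k
      have hg : job k = ((P.get ⟨(k:ℕ), by omega⟩).2.2.1, (P.get ⟨(k:ℕ), by omega⟩).2.2.2) := by
        simp only [hjobdef, hjobs, List.get_eq_getElem, List.getElem_map]
        rfl
      rcases hform k with h | h <;> rw [hg, h]
      · left; rfl
      · right; rfl
    obtain ⟨S1, S2, c0, c12, cm1, cm2, cC⟩ := hsched
    have hS2nn : ∀ j, (0:ℝ) ≤ S2 j := fun j =>
      le_trans (by have := c0 j; positivity) (c12 j)
    have load1 : ∑ j : Fin jobs.length, (jobs.get j).1 ≤ C :=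
      load_le _ S1 C c0 cm1
        (fun j => le_trans (c12 j) (le_trans (le_add_of_nonneg_right (by positivity)) (cC j)))
    have load2 : ∑ j : Fin jobs.length, (jobs.get j).2 ≤ C :=
      load_le _ S2 C hS2nn cm2 cC
    have r1 : ∑ k : Fin n, (job k).1 = ∑ j : Fin jobs.length, (jobs.get j).1 :=
      Fin.sum_congr' (fun j => (jobs.get j).1) hjlen.symm
    have r2 : ∑ k : Fin n, (job k).2 = ∑ j : Fin jobs.length, (jobs.get j).2 :=
      Fin.sum_congr' (fun j => (jobs.get j).2) hjlen.symm
    have load1' : ∑ k : Fin n, (job k).1 ≤ C := by rw [r1]; exact load1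
    have load2' : ∑ k : Fin n, (job k).2 ≤ C := by rw [r2]; exact load2
    have hsumjob : ∑ k : Fin n, ((job k).1 + (job k).2) = 2 * C := by
      rw [← htot]
      refine Finset.sum_congr rfl (fun k _ => ?_)
      rcases hjob k with h | h <;> rw [h] <;> simp
    have htotsplit : ∑ k : Fin n, (job k).1 + ∑ k : Fin n, (job k).2 = 2 * C := by
      rw [← Finset.sum_add_distrib]; exact hsumjob
    have hload1C : ∑ k : Fin n, (job k).1 = C := by omega
    set T : Finset (Fin n) := Finset.univ.filter (fun k => (job k).2 = 0) with hTdef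
    refine ⟨T, ?_⟩
    have hTs : ∀ k ∈ T, s k = (job k).1 := by
      intro k hk
      rw [hTdef, Finset.mem_filter] at hk
      rcases hjob k with h | h
      · rw [h]
      · exfalso; rw [h] at hk; exact (hpos k).ne' hk.2
    have hT0 : ∀ k ∈ (Finset.univ : Finset (Fin n)), k ∉ T → (job k).1 = 0 := by
      intro k _ hk
      rcases hjob k with h | h
      · exfalso; exact hk (by rw [hTdef, Finset.mem_filter]; exact ⟨Finset.mem_univ _, by rw [h]⟩)
      · rw [h]
    calc ∑ k ∈ T, s k = ∑ k ∈ T, (job k).1 := Finset.sum_congr rfl hTs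
      _ = ∑ k : Fin n, (job k).1 := Finset.sum_subset (Finset.subset_univ T) hT0
      _ = C := hload1C
  · rintro ⟨T, hT⟩
    set f : Fin n → ℕ × ℕ × ℕ × ℕ :=
      fun k => if k ∈ T then ((k:ℕ), (k:ℕ)+1, s k, 0) else ((k:ℕ), (k:ℕ)+1, 0, s k) with hf
    refine ⟨(List.finRange n).map f, ?_, ?_, ?_, ?_⟩
    · intro a ha
      rw [List.mem_map] at ha
      obtain ⟨k, -, rfl⟩ := ha
      rw [mem_reductionArcs]
      refine ⟨k, ?_⟩
      by_cases hk : k ∈ T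
      · left; simp [hf, hk]
      · right; simp [hf, hk]
    · refine List.Nodup.map ?_ (List.nodup_finRange n)
      intro a b hab
      have hfst : (f a).1 = (f b).1 := congrArg Prod.fst hab
      have ha : (f a).1 = (a:ℕ) := by by_cases h : a ∈ T <;> simp [hf, h]
      have hb : (f b).1 = (b:ℕ) := by by_cases h : b ∈ T <;> simp [hf, h]
      exact Fin.ext (by rw [ha, hb] at hfst; exact hfst)
    · have hlen : ((List.finRange n).map f).length = n := by simp
      have hc := chain_of_gets ((List.finRange n).map f) 0 ?_
      · rw [hlen] at hc; simpa using hc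
      · intro i hi
        have hi' : i < n := by simpa using hi
        have hget : ((List.finRange n).map f).get ⟨i, hi⟩ = f ⟨i, hi'⟩ := by
          simp only [List.get_eq_getElem, List.getElem_map]
          congr 1
          exact List.get_finRange _
        rw [hget]
        by_cases h : (⟨i, hi'⟩ : Fin n) ∈ T <;> simp [hf, h]
    · have hjobs2 : ((List.finRange n).map f).map (fun a => (a.2.2.1, a.2.2.2))
          = (List.finRange n).map (fun k => if k ∈ T then (s k, 0) else (0, s k)) := by
        rw [List.map_map]
        refine List.map_congr_left (fun k _ => ?_)
        by_cases h : k ∈ T <;> simp [hf, h]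
      rw [hjobs2]
      have hsum1 : (((List.finRange n).map
          (fun k => if k ∈ T then (s k, 0) else (0, s k))).map Prod.fst).sum
          = ∑ k ∈ T, s k := by
        rw [List.map_map, ← List.ofFn_eq_map, List.sum_ofFn]
        have : ∀ k : Fin n,
            (Prod.fst ∘ fun k => if k ∈ T then ((s k, 0) : ℕ × ℕ) else (0, s k)) k
            = if k ∈ T then s k else 0 := by
          intro k; by_cases h : k ∈ T <;> simp [h]
        rw [Finset.sum_congr rfl (fun k _ => this k), Finset.sum_ite_mem, Finset.univ_inter]
      have hsum2 : (((List.finRange n).map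
          (fun k => if k ∈ T then (s k, 0) else (0, s k))).map Prod.snd).sum
          = ∑ k ∈ Tᶜ, s k := by
        rw [List.map_map, ← List.ofFn_eq_map, List.sum_ofFn]
        have : ∀ k : Fin n,
            (Prod.snd ∘ fun k => if k ∈ T then ((s k, 0) : ℕ × ℕ) else (0, s k)) k
            = if k ∈ Tᶜ then s k else 0 := by
          intro k; by_cases h : k ∈ T <;> simp [h]
        rw [Finset.sum_congr rfl (fun k _ => this k), Finset.sum_ite_mem, Finset.univ_inter]
      have hcomp : ∑ k ∈ Tᶜ, s k = C := by
        have := Finset.sum_add_sum_compl T s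
        omega
      apply schedulable2_of_disjoint
      · intro j hj
        rw [List.mem_map] at hj
        obtain ⟨k, -, rfl⟩ := hj
        by_cases h : k ∈ T <;> simp [h]
      · rw [hsum1, hT]
      · rw [hsum2, hcomp]
  
end PartitionReduction
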